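/- Let F = GF(p^m), g a generator of F*, c ∈ ℕ, and let φ : F → (ZMod p)^m be any ZMod p-linear bijection (isomorphism of F as a vector space over its prime field onto the coordinate space). Define f : Fin (q−1) → (ZMod p)^m by f(i) = φ(g^{i+c}), where q = p^m. Then the set {(i, f(i)) : i ∈ Fin (q−1)} has the Costas property: i₁ − i₂ = i₃ − i₄ and f(i₁) − f(i₂) = f(i₃) − f(i₄) with i₁ ≠ i₂ implies i₁ = i₃ and i₂ = i₄. -/
import Mathlib


/-- Generalized Welch construction with an arbitrary basis: composing the Welch
exponential with any `ZMod p`-linear isomorphism `φ : F ≃ (ZMod p)^m` yields a set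
`{(i, φ(g^(i+c)))}` with the Costas property. -/
theorem welch_extension_arbitrary_basis (p m : ℕ) (hp : p.Prime)
    (F : Type*) [Field F] [Fintype F] [Algebra (ZMod p) F]
    (hcard : Fintype.card F = p ^ m)
    (g : Fˣ) (hg : ∀ x : Fˣ, x ∈ Subgroup.zpowers g) (c : ℕ)
    (φ : F ≃ₗ[ZMod p] (Fin m → ZMod p)) :
    ∀ i₁ i₂ i₃ i₄ : Fin (Fintype.card F - 1), i₁ ≠ i₂ →
      ((i₁ : ℕ) : ℤ) - ((i₂ : ℕ) : ℤ) = ((i₃ : ℕ) : ℤ) - ((i₄ : ℕ) : ℤ) →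
      φ ((g ^ ((i₁ : ℕ) + c) : Fˣ) : F) - φ ((g ^ ((i₂ : ℕ) + c) : Fˣ) : F) =
        φ ((g ^ ((i₃ : ℕ) + c) : Fˣ) : F) - φ ((g ^ ((i₄ : ℕ) + c) : Fˣ) : F) →
      i₁ = i₃ ∧ i₂ = i₄ := by
  classical
  intro i₁ i₂ i₃ i₄ hne hdiff hφ
  have hord : orderOf g = Fintype.card F - 1 := by
    rw [orderOf_eq_card_of_forall_mem_zpowers hg, Nat.card_eq_fintype_card,
      Fintype.card_units]
  -- push φ through subtraction and use injectivity
  have hF : ((g ^ ((i₁ : ℕ) + c) : Fˣ) : F) - ((g ^ ((i₂ : ℕ) + c) : Fˣ) : F) =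
      ((g ^ ((i₃ : ℕ) + c) : Fˣ) : F) - ((g ^ ((i₄ : ℕ) + c) : Fˣ) : F) := by
    apply φ.injective
    simpa [map_sub] using hφ
  set k : ℤ := (i₃ : ℕ) - (i₁ : ℕ) with hk
  have hk2 : ((i₄ : ℕ) : ℤ) - ((i₂ : ℕ) : ℤ) = k := by omega
  have h3 : (g : Fˣ) ^ (((i₃ : ℕ) + c : ℕ) : ℤ) = g ^ k * g ^ (((i₁ : ℕ) + c : ℕ) : ℤ) := by
    rw [← zpow_add]; congr 1; push_cast; ring
  have h4 : (g : Fˣ) ^ (((i₄ : ℕ) + c : ℕ) : ℤ) = g ^ k * g ^ (((i₂ : ℕ) + c : ℕ) : ℤ) := by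
    rw [← zpow_add]; congr 1; push_cast; omega
  have hF' : ((g ^ ((i₁ : ℕ) + c) : Fˣ) : F) - ((g ^ ((i₂ : ℕ) + c) : Fˣ) : F) =
      ((g ^ k : Fˣ) : F) * (((g ^ ((i₁ : ℕ) + c) : Fˣ) : F) - ((g ^ ((i₂ : ℕ) + c) : Fˣ) : F)) := by
    have e3 : (g ^ ((i₃ : ℕ) + c) : Fˣ) = g ^ k * g ^ ((i₁ : ℕ) + c) := by
      rw [← zpow_natCast g ((i₃ : ℕ) + c), ← zpow_natCast g ((i₁ : ℕ) + c)]; exact h3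
    have e4 : (g ^ ((i₄ : ℕ) + c) : Fˣ) = g ^ k * g ^ ((i₂ : ℕ) + c) := by
      rw [← zpow_natCast g ((i₄ : ℕ) + c), ← zpow_natCast g ((i₂ : ℕ) + c)]; exact h4
    have e3' : ((g ^ ((i₃ : ℕ) + c) : Fˣ) : F) =
        ((g ^ k : Fˣ) : F) * ((g ^ ((i₁ : ℕ) + c) : Fˣ) : F) := by
      rw [e3]; rfl
    have e4' : ((g ^ ((i₄ : ℕ) + c) : Fˣ) : F) =
        ((g ^ k : Fˣ) : F) * ((g ^ ((i₂ : ℕ) + c) : Fˣ) : F) := by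
      rw [e4]; rfl
    rw [e3', e4'] at hF
    linear_combination hF
  have hab : ((g ^ ((i₁ : ℕ) + c) : Fˣ) : F) - ((g ^ ((i₂ : ℕ) + c) : Fˣ) : F) ≠ 0 := by
    intro h
    have : (g ^ ((i₁ : ℕ) + c) : Fˣ) = g ^ ((i₂ : ℕ) + c) := by
      apply Units.ext
      have := sub_eq_zero.mp h
      simpa using this
    rw [pow_eq_pow_iff_modEq, hord] at this
    have h1 := i₁.isLt
    have h2 := i₂.isLt
    have : (i₁ : ℕ) % (Fintype.card F - 1) = (i₂ : ℕ) % (Fintype.card F - 1) := by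
      have := (Nat.ModEq.add_right_cancel' c this)
      exact this
    rw [Nat.mod_eq_of_lt h1, Nat.mod_eq_of_lt h2] at this
    exact hne (Fin.ext this)
  have hgk : ((g ^ k : Fˣ) : F) = 1 := by
    have hzero : (((g ^ k : Fˣ) : F) - 1) *
        (((g ^ ((i₁ : ℕ) + c) : Fˣ) : F) - ((g ^ ((i₂ : ℕ) + c) : Fˣ) : F)) = 0 := by
      linear_combination -hF'
    rcases mul_eq_zero.mp hzero with h | h
    · exact sub_eq_zero.mp h
    · exact absurd h hab
  have hgk' : (g : Fˣ) ^ k = 1 := Units.ext (by simpa using hgk)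
  have hdvd : ((orderOf g : ℕ) : ℤ) ∣ k := orderOf_dvd_iff_zpow_eq_one.mpr hgk'
  rw [hord] at hdvd
  have h1 := i₁.isLt
  have h3' := i₃.isLt
  have hk0 : k = 0 := by
    apply Int.eq_zero_of_abs_lt_dvd hdvd
    rw [abs_lt]
    omega
  have e13 : i₁ = i₃ := Fin.ext (by omega)
  exact ⟨e13, Fin.ext (by omega)⟩
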